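/- Let n, m be natural numbers, let A be an n×n real matrix, C an m×m real matrix, and B an m×n real matrix. Assume A and C are positive semidefinite (symmetric with x ⬝ A x ≥ 0 for all x, resp. y ⬝ C y ≥ 0 for all y), that the only vector x ∈ ℝⁿ with A x = 0 and B x = 0 is x = 0, and that the only vector y ∈ ℝᵐ with C y = 0 and Bᵀ y = 0 is y = 0. Then the (n+m)×(n+m) block matrix [[A, Bᵀ], [−B, C]] is invertible. -/

import Mathlib

open Matrix

/-- Lemma 3.4: if `A` and `C` are positive semidefinite, and the kernels of
`A` and `B` (resp. `C` and `Bᵀ`) intersect trivially, then the block matrix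
`[[A, Bᵀ], [-B, C]]` is invertible. -/
theorem block_matrix_invertible (n m : ℕ)
    (A : Matrix (Fin n) (Fin n) ℝ) (C : Matrix (Fin m) (Fin m) ℝ)
    (B : Matrix (Fin m) (Fin n) ℝ)
    (hAsymm : A.IsSymm) (hApsd : ∀ x : Fin n → ℝ, 0 ≤ x ⬝ᵥ A.mulVec x)
    (hCsymm : C.IsSymm) (hCpsd : ∀ y : Fin m → ℝ, 0 ≤ y ⬝ᵥ C.mulVec y)
    (hkerAB : ∀ x : Fin n → ℝ, A.mulVec x = 0 → B.mulVec x = 0 → x = 0)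
    (hkerCBT : ∀ y : Fin m → ℝ, C.mulVec y = 0 → Bᵀ.mulVec y = 0 → y = 0) :
    IsUnit (Matrix.fromBlocks A Bᵀ (-B) C) := by
  have hA : A.PosSemidef := Matrix.PosSemidef.of_dotProduct_mulVec_nonneg (by simpa [Matrix.IsHermitian] using hAsymm.eq)
    (fun x => by simpa using hApsd x)
  have hC : C.PosSemidef := Matrix.PosSemidef.of_dotProduct_mulVec_nonneg (by simpa [Matrix.IsHermitian] using hCsymm.eq)
    (fun y => by simpa using hCpsd y)
  rw [← Matrix.mulVec_injective_iff_isUnit]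
  set M := Matrix.fromBlocks A Bᵀ (-B) C with hM
  have hker : ∀ z, M *ᵥ z = 0 → z = 0 := by
    intro z hz
    set x : Fin n → ℝ := z ∘ Sum.inl
    set y : Fin m → ℝ := z ∘ Sum.inr
    rw [Matrix.fromBlocks_mulVec] at hz
    have h1 : A *ᵥ x + Bᵀ *ᵥ y = 0 := by
      have := congrArg (fun f => f ∘ Sum.inl) hz
      funext i; exact congrFun this i
    have h2 : (-B) *ᵥ x + C *ᵥ y = 0 := by
      have := congrArg (fun f => f ∘ Sum.inr) hz
      funext i; exact congrFun this i
    -- dot with x and y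
    have key : x ⬝ᵥ A *ᵥ x + y ⬝ᵥ C *ᵥ y = 0 := by
      have hx : x ⬝ᵥ (A *ᵥ x + Bᵀ *ᵥ y) = 0 := by rw [h1, dotProduct_zero]
      have hy : y ⬝ᵥ ((-B) *ᵥ x + C *ᵥ y) = 0 := by rw [h2, dotProduct_zero]
      have hcross : x ⬝ᵥ Bᵀ *ᵥ y = y ⬝ᵥ B *ᵥ x := by
        rw [Matrix.dotProduct_mulVec, Matrix.vecMul_transpose, dotProduct_comm]
      have := congrArg₂ (· + ·) hx hy
      simp only [dotProduct_add, neg_mulVec, dotProduct_neg, add_zero] at this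
      linarith [this, hcross]
    have hAx0 : x ⬝ᵥ A *ᵥ x = 0 := le_antisymm (by linarith [hCpsd y]) (hApsd x)
    have hCy0 : y ⬝ᵥ C *ᵥ y = 0 := le_antisymm (by linarith [hApsd x]) (hCpsd y)
    have hAx : A *ᵥ x = 0 := by
      have := (hA.dotProduct_mulVec_zero_iff x).mp (by simpa using hAx0)
      exact this
    have hCy : C *ᵥ y = 0 := by
      have := (hC.dotProduct_mulVec_zero_iff y).mp (by simpa using hCy0)
      exact this
    have hBTy : Bᵀ *ᵥ y = 0 := by rwa [hAx, zero_add] at h1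
    have hBx : B *ᵥ x = 0 := by
      have := h2; rw [hCy, add_zero, neg_mulVec, neg_eq_zero] at this; exact this
    have hx0 := hkerAB x hAx hBx
    have hy0 := hkerCBT y hCy hBTy
    funext i
    cases i with
    | inl i => exact congrFun hx0 i
    | inr i => exact congrFun hy0 i
  
  intro a b hab
  have : M *ᵥ (a - b) = 0 := by rw [Matrix.mulVec_sub, hab, sub_self]
  have := hker _ this
  exact sub_eq_zero.mp this
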